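/- With the above vertex-addition setup, the operator S = L_q + Σ_{i=1}^m P_{σ_i} − (1/α) P_σ (the Schur complement of the α-block in L'_p) can be written as S = L_q + Σ_{k=1}^{m(m+1)/2} P_{π_k}, where π_k = √(λ/α) σ_k for k = 1,…,m, and π_k = (1/√α)(ρ_i ρ_j/ω(x'))(ε_{x_i}/ω(x_i) − ε_{x_j}/ω(x_j)) for k = (2m−1−i)i/2 + j with 1 ≤ i < j ≤ m. -/

import Mathlib

open Finset

noncomputable def ip {V : Type*} [Fintype V] (u v : V → ℝ) : ℝ := ∑ x, u x * v x

noncomputable def lap {V : Type*} [Fintype V] (c : V → V → ℝ) (u : V → ℝ) : V → ℝ :=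
  fun x => ∑ y, c x y * (u x - u y)

noncomputable def eps {V : Type*} [DecidableEq V] (x : V) : V → ℝ :=
  fun y => if y = x then 1 else 0

lemma pair_sum {m : ℕ} (p B C : Fin m → ℝ) :
    ∑ i, ∑ j, (if i < j then p i * p j * (B i - B j) * (C i - C j) else 0)
      = (∑ k, p k) * (∑ i, p i * B i * C i) - (∑ i, p i * B i) * (∑ j, p j * C j) := by
  have hsplit : ∀ i j : Fin m, p i * p j * (B i - B j) * (C i - C j)
      = (if i < j then p i * p j * (B i - B j) * (C i - C j) else 0)
        + (if j < i then p i * p j * (B i - B j) * (C i - C j) else 0) := by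
    intro i j
    rcases lt_trichotomy i j with h | h | h
    · simp [h, not_lt_of_gt h]
    · simp [h]
    · simp [h, not_lt_of_gt h]
  have hswap : ∑ i, ∑ j, (if j < i then p i * p j * (B i - B j) * (C i - C j) else 0)
      = ∑ i, ∑ j, (if i < j then p i * p j * (B i - B j) * (C i - C j) else 0) := by
    rw [Finset.sum_comm]
    apply Finset.sum_congr rfl; intro i _
    apply Finset.sum_congr rfl; intro j _
    ring_nf
  have hfull : ∑ i, ∑ j, p i * p j * (B i - B j) * (C i - C j)
      = 2 * ∑ i, ∑ j, (if i < j then p i * p j * (B i - B j) * (C i - C j) else 0) := by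
    calc ∑ i, ∑ j, p i * p j * (B i - B j) * (C i - C j)
        = ∑ i, ∑ j, ((if i < j then p i * p j * (B i - B j) * (C i - C j) else 0)
            + (if j < i then p i * p j * (B i - B j) * (C i - C j) else 0)) := by
          exact Finset.sum_congr rfl fun i _ => Finset.sum_congr rfl fun j _ => hsplit i j
      _ = _ := by
          simp only [Finset.sum_add_distrib, hswap]; ring
  have hexp : ∑ i, ∑ j, p i * p j * (B i - B j) * (C i - C j)
      = 2 * ((∑ k, p k) * (∑ i, p i * B i * C i) - (∑ i, p i * B i) * (∑ j, p j * C j)) := by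
    have e : ∀ i j : Fin m, p i * p j * (B i - B j) * (C i - C j)
        = (p i * B i * C i) * p j - (p i * B i) * (p j * C j)
          - (p i * C i) * (p j * B j) + p i * (p j * B j * C j) := by intro i j; ring
    simp only [e, Finset.sum_add_distrib, Finset.sum_sub_distrib, ← Finset.mul_sum,
      ← Finset.sum_mul]
    ring
  linarith [hfull, hexp]

lemma core {m : ℕ} (p U E : Fin m → ℝ) (lam w' α : ℝ) (hw' : w' ≠ 0) (hα : α ≠ 0)
    (hαdef : α = lam + (1 / w') * ∑ k, p k) :
    (∑ i, w' * (p i * U i * E i)) - (1 / α) * ((∑ i, p i * U i) * (∑ i, p i * E i))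
      = (∑ i, (lam / α) * (w' * (p i * U i * E i)))
        + ∑ i, ∑ j, (if i < j then (1 / α) * (p i * p j * (U i - U j) * (E i - E j)) else 0) := by
  have h1 : ∑ i, ∑ j, (if i < j then (1 / α) * (p i * p j * (U i - U j) * (E i - E j)) else 0)
      = (1 / α) * ∑ i, ∑ j, (if i < j then p i * p j * (U i - U j) * (E i - E j) else 0) := by
    simp only [Finset.mul_sum]
    exact Finset.sum_congr rfl fun i _ => Finset.sum_congr rfl fun j _ => by split <;> simp
  rw [h1, pair_sum, ← Finset.mul_sum, ← Finset.mul_sum, ← Finset.mul_sum]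
  have hs : ∑ k, p k = (α - lam) * w' := by rw [hαdef]; field_simp; ring
  rw [hs]
  field_simp
  ring

lemma ip_mul_eps {V : Type*} [Fintype V] [DecidableEq V] (k : ℝ) (x0 : V) (u : V → ℝ) :
    ip (fun z => k * eps x0 z) u = k * u x0 := by
  simp [ip, eps, ite_mul, mul_ite, Finset.sum_ite_eq']

lemma ip_smul_eps {V : Type*} [Fintype V] [DecidableEq V] (k : ℝ) (x0 : V) (u : V → ℝ) :
    ip (fun z => k • eps x0 z) u = k * u x0 := by
  simp [ip, eps, ite_mul, mul_ite, Finset.sum_ite_eq']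

lemma ip_mul_mul_eps {V : Type*} [Fintype V] [DecidableEq V] (k c : ℝ) (x0 : V) (u : V → ℝ) :
    ip (fun z => k * (c * eps x0 z)) u = k * (c * u x0) := by
  simp [ip, eps, ite_mul, mul_ite, Finset.sum_ite_eq', mul_assoc]

lemma ip_sum_eps {V : Type*} [Fintype V] [DecidableEq V] {m : ℕ} (a : Fin m → ℝ) (x : Fin m → V)
    (u : V → ℝ) : ip (fun z => ∑ i, a i * eps (x i) z) u = ∑ i, a i * u (x i) := by
  simp only [ip, Finset.sum_mul]
  rw [Finset.sum_comm]
  simp [eps, ite_mul, mul_ite, Finset.sum_ite_eq']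

lemma ip_dipole {V : Type*} [Fintype V] [DecidableEq V] (k wi wj : ℝ) (xi xj : V) (u : V → ℝ) :
    ip (fun z => k * (eps xi z / wi - eps xj z / wj)) u
      = k * (u xi / wi - u xj / wj) := by
  simp only [ip, eps, mul_sub, sub_mul, Finset.sum_sub_distrib, div_eq_mul_inv, mul_ite, mul_one,
    mul_zero, ite_mul, zero_mul, Finset.sum_ite_eq', Finset.mem_univ, if_true]
  ring

/-- The Schur complement `S = L_q + Σ_i P_{σ_i} − (1/α) P_σ` of the `α`-block of `L'_p`
can be written as `S = L_q + Σ_k P_{π_k}`, where `π_k = √(λ/α) σ_k` for `k ≤ m` and the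
remaining `π_k` are the `m(m−1)/2` scaled dipoles. -/
theorem stmt9 {V : Type*} [Fintype V] [DecidableEq V] [Nonempty V] {m : ℕ}
    (c : V → V → ℝ) (ω : V → ℝ) (lam w' : ℝ) (x : Fin m → V) (a : Fin m → ℝ)
    (hc_symm : ∀ y z, c y z = c z y)
    (hc_nonneg : ∀ y z, 0 ≤ c y z)
    (hc_diag : ∀ y, c y y = 0)
    (hconn : ∀ y z : V, Relation.ReflTransGen (fun s t => 0 < c s t) y z)
    (hω_pos : ∀ y, 0 < ω y) (hω_unit : ∑ y, (ω y) ^ 2 = 1)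
    (hlam : 0 ≤ lam) (hw' : 0 < w')
    (ha : ∀ i, 0 < a i) (hx : Function.Injective x) :
    ∀ u : V → ℝ,
      (fun y => lap c u y + (-(lap c ω y) / ω y + lam) * u y)
        + (∑ i, ip (fun z => (Real.sqrt (a i * ω (x i) * w') / ω (x i)) • eps (x i) z) u
            • fun z => (Real.sqrt (a i * ω (x i) * w') / ω (x i)) • eps (x i) z)
        - (1 / (lam + (1 / w' ^ 2) * ∑ i, Real.sqrt (a i * ω (x i) * w') ^ 2)) •
            (ip (fun z => ∑ i, a i * eps (x i) z) u • fun z => ∑ i, a i * eps (x i) z)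
      = (fun y => lap c u y + (-(lap c ω y) / ω y + lam) * u y)
        + (∑ i, ip (fun z =>
              Real.sqrt (lam / (lam + (1 / w' ^ 2) * ∑ r, Real.sqrt (a r * ω (x r) * w') ^ 2)) *
                ((Real.sqrt (a i * ω (x i) * w') / ω (x i)) * eps (x i) z)) u
            • fun z =>
              Real.sqrt (lam / (lam + (1 / w' ^ 2) * ∑ r, Real.sqrt (a r * ω (x r) * w') ^ 2)) *
                ((Real.sqrt (a i * ω (x i) * w') / ω (x i)) * eps (x i) z))
        + ∑ i, ∑ j, (if i < j then
            (ip (fun z =>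
                (1 / Real.sqrt (lam + (1 / w' ^ 2) * ∑ r, Real.sqrt (a r * ω (x r) * w') ^ 2)) *
                  (Real.sqrt (a i * ω (x i) * w') * Real.sqrt (a j * ω (x j) * w') / w') *
                  (eps (x i) z / ω (x i) - eps (x j) z / ω (x j))) u
              • fun z =>
                (1 / Real.sqrt (lam + (1 / w' ^ 2) * ∑ r, Real.sqrt (a r * ω (x r) * w') ^ 2)) *
                  (Real.sqrt (a i * ω (x i) * w') * Real.sqrt (a j * ω (x j) * w') / w') *
                  (eps (x i) z / ω (x i) - eps (x j) z / ω (x j)))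
          else 0) := by
  intro u
  rcases Nat.eq_zero_or_pos m with hm | hm
  · subst hm
    funext y
    simp [ip]
  funext y
  simp only [ip_smul_eps, ip_mul_eps, ip_mul_mul_eps, ip_sum_eps, ip_dipole, Pi.add_apply,
    Pi.sub_apply, Pi.smul_apply, Finset.sum_apply, ite_apply, Pi.zero_apply, smul_eq_mul]
  have hρsq : ∀ i, Real.sqrt (a i * ω (x i) * w') ^ 2 = a i * ω (x i) * w' := fun i =>
    Real.sq_sqrt (by have h1 := ha i; have h2 := hω_pos (x i); positivity)
  set α : ℝ := lam + (1 / w' ^ 2) * ∑ i, Real.sqrt (a i * ω (x i) * w') ^ 2 with hα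
  have hαpos : 0 < α := by
    have h0 : 0 < Real.sqrt (a ⟨0, hm⟩ * ω (x ⟨0, hm⟩) * w') ^ 2 := by
      rw [hρsq]
      have h1 := ha ⟨0, hm⟩; have h2 := hω_pos (x ⟨0, hm⟩); positivity
    have hsum : Real.sqrt (a ⟨0, hm⟩ * ω (x ⟨0, hm⟩) * w') ^ 2
        ≤ ∑ i, Real.sqrt (a i * ω (x i) * w') ^ 2 :=
      Finset.single_le_sum (f := fun i => Real.sqrt (a i * ω (x i) * w') ^ 2)
        (fun i _ => sq_nonneg _) (Finset.mem_univ _)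
    have hpos : 0 < (1 / w' ^ 2) * ∑ i, Real.sqrt (a i * ω (x i) * w') ^ 2 :=
      mul_pos (by positivity) (lt_of_lt_of_le h0 hsum)
    rw [hα]; linarith
  have hssq : Real.sqrt (lam / α) ^ 2 = lam / α :=
    Real.sq_sqrt (div_nonneg hlam hαpos.le)
  have htsq : (1 / Real.sqrt α) ^ 2 = 1 / α := by
    rw [div_pow, one_pow, Real.sq_sqrt hαpos.le]
  have key := core (fun i => a i * ω (x i)) (fun i => u (x i) / ω (x i))
    (fun i => eps (x i) y / ω (x i)) lam w' α hw'.ne' hαpos.ne' ?αdef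
  case αdef =>
    rw [hα]
    congr 1
    rw [Finset.mul_sum, Finset.mul_sum]
    refine Finset.sum_congr rfl fun i _ => ?_
    rw [hρsq]
    field_simp
  have e1 : ∑ i, Real.sqrt (a i * ω (x i) * w') / ω (x i) * u (x i)
        * (Real.sqrt (a i * ω (x i) * w') / ω (x i) * eps (x i) y)
      = ∑ i, w' * (a i * ω (x i) * (u (x i) / ω (x i)) * (eps (x i) y / ω (x i))) := by
    refine Finset.sum_congr rfl fun i _ => ?_
    have h2 := (hω_pos (x i)).ne'
    have expand : Real.sqrt (a i * ω (x i) * w') / ω (x i) * u (x i)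
        * (Real.sqrt (a i * ω (x i) * w') / ω (x i) * eps (x i) y)
        = Real.sqrt (a i * ω (x i) * w') ^ 2 * u (x i) * eps (x i) y / ω (x i) ^ 2 := by
      ring
    rw [expand, hρsq]
    field_simp
  have e2 : ∑ i, a i * u (x i)
      = ∑ i, a i * ω (x i) * (u (x i) / ω (x i)) := by
    refine Finset.sum_congr rfl fun i _ => ?_
    have h2 := (hω_pos (x i)).ne'
    field_simp
  have e3 : ∑ i, a i * eps (x i) y
      = ∑ i, a i * ω (x i) * (eps (x i) y / ω (x i)) := by
    refine Finset.sum_congr rfl fun i _ => ?_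
    have h2 := (hω_pos (x i)).ne'
    field_simp
  have e4 : ∑ i, Real.sqrt (lam / α) * (Real.sqrt (a i * ω (x i) * w') / ω (x i) * u (x i))
        * (Real.sqrt (lam / α) * (Real.sqrt (a i * ω (x i) * w') / ω (x i) * eps (x i) y))
      = ∑ i, lam / α * (w' * (a i * ω (x i) * (u (x i) / ω (x i)) * (eps (x i) y / ω (x i)))) := by
    refine Finset.sum_congr rfl fun i _ => ?_
    have h2 := (hω_pos (x i)).ne'
    have expand : Real.sqrt (lam / α) * (Real.sqrt (a i * ω (x i) * w') / ω (x i) * u (x i))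
        * (Real.sqrt (lam / α) * (Real.sqrt (a i * ω (x i) * w') / ω (x i) * eps (x i) y))
        = Real.sqrt (lam / α) ^ 2
          * (Real.sqrt (a i * ω (x i) * w') ^ 2 * u (x i) * eps (x i) y / ω (x i) ^ 2) := by
      ring
    rw [expand, hssq, hρsq]
    field_simp
  have e5 : ∑ i, ∑ j, (if i < j then
        1 / Real.sqrt α * (Real.sqrt (a i * ω (x i) * w') * Real.sqrt (a j * ω (x j) * w') / w')
            * (u (x i) / ω (x i) - u (x j) / ω (x j))
          * (1 / Real.sqrt α
              * (Real.sqrt (a i * ω (x i) * w') * Real.sqrt (a j * ω (x j) * w') / w')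
              * (eps (x i) y / ω (x i) - eps (x j) y / ω (x j)))
        else 0)
      = ∑ i, ∑ j, (if i < j then
          1 / α * (a i * ω (x i) * (a j * ω (x j)) * (u (x i) / ω (x i) - u (x j) / ω (x j))
            * (eps (x i) y / ω (x i) - eps (x j) y / ω (x j))) else 0) := by
    refine Finset.sum_congr rfl fun i _ => Finset.sum_congr rfl fun j _ => ?_
    rcases lt_or_ge i j with h | h
    · simp only [h, if_true]
      have expand : 1 / Real.sqrt α
            * (Real.sqrt (a i * ω (x i) * w') * Real.sqrt (a j * ω (x j) * w') / w')
            * (u (x i) / ω (x i) - u (x j) / ω (x j))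
          * (1 / Real.sqrt α
              * (Real.sqrt (a i * ω (x i) * w') * Real.sqrt (a j * ω (x j) * w') / w')
              * (eps (x i) y / ω (x i) - eps (x j) y / ω (x j)))
          = (1 / Real.sqrt α) ^ 2
            * (Real.sqrt (a i * ω (x i) * w') ^ 2 * Real.sqrt (a j * ω (x j) * w') ^ 2 / w' ^ 2
              * ((u (x i) / ω (x i) - u (x j) / ω (x j))
                * (eps (x i) y / ω (x i) - eps (x j) y / ω (x j)))) := by
        ring
      rw [expand, htsq, hρsq, hρsq]
      field_simp
    · simp [not_lt_of_ge h]
  rw [e1, e2, e3, e4, e5]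
  linarith [key]
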